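/- Let H be a finite group of odd order. Then the nim-number of the achievement game GEN(H) is *0 if |H| = 1, is *2 if |H| > 1 and d(H) ∈ {1,2}, and is *1 otherwise (i.e., if d(H) ≥ 3). -/

import Mathlib

universe u

/-- `Nimber` as in the older Mathlib: a type synonym for `Ordinal`. -/
def Nimber : Type (u + 1) := Ordinal.{u}

namespace Nimber

noncomputable instance : InfSet Nimber.{u} := inferInstanceAs (InfSet Ordinal.{u})

end Nimber

/-- The identity map from `Ordinal` to `Nimber` (the older `Ordinal.toNimber`). -/
def Ordinal.toNimber : Ordinal.{u} → Nimber.{u} := fun o => o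

prefix:max "∗" => Ordinal.toNimber

namespace SetTheory

/-- Pre-games, as in the older Mathlib `SetTheory.PGame`. -/
inductive PGame : Type (u + 1)
  | mk : ∀ α β : Type u, (α → PGame) → (β → PGame) → PGame

namespace PGame

instance : Zero PGame.{u} := ⟨⟨PEmpty, PEmpty, PEmpty.elim, PEmpty.elim⟩⟩

/-- The Grundy value of an impartial game: the mex of the Grundy values of its (left) options. -/
noncomputable def grundyValue : PGame.{u} → Nimber.{u}
  | mk _ _ L _ => sInf (Set.range fun i => grundyValue (L i))ᶜ

end PGame

end SetTheory

open SetTheory Nimber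
open scoped Classical

/-- The achievement game `GEN(G)` of Anderson and Harary: positions are (finite) subsets
of the finite group `G`; a position that generates `G` is terminal, and otherwise the
options are obtained by selecting a previously-unselected element of `G`.  The game is
impartial, so the left and right options agree. -/
noncomputable def genGame {G : Type} [Group G] [Fintype G] (P : Finset G) : PGame :=
  if Subgroup.closure (P : Set G) = ⊤ then 0
  else
    PGame.mk {g : G // g ∉ P} {g : G // g ∉ P}
      (fun g => genGame (insert g.1 P)) (fun g => genGame (insert g.1 P))
termination_by Fintype.card G - P.card
decreasing_by
  all_goals
    have h1 : (insert g.1 P).card = P.card + 1 := Finset.card_insert_of_notMem g.2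
    have h2 : (insert g.1 P).card ≤ Fintype.card G := Finset.card_le_univ _
    omega

/-- The nim-number of the achievement game `GEN(G)`, i.e. the Sprague-Grundy value of the
starting position `∅`. -/
noncomputable def nimGEN (G : Type) [Group G] [Fintype G] : Nimber :=
  PGame.grundyValue (genGame (∅ : Finset G))

/-- `d(G)`: the minimal cardinality of a generating set of `G`. -/
noncomputable def minGen (G : Type) [Group G] : ℕ :=
  sInf {n : ℕ | ∃ S : Finset G, S.card = n ∧ Subgroup.closure (S : Set G) = ⊤}


noncomputable instance : ConditionallyCompleteLinearOrderBot Nimber.{u} :=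
  inferInstanceAs (ConditionallyCompleteLinearOrderBot Ordinal.{u})
noncomputable instance : Zero Nimber.{u} := inferInstanceAs (Zero Ordinal.{u})

theorem Ordinal.toNimber_zero : ∗(0 : Ordinal.{u}) = (0 : Nimber.{u}) := rfl
theorem Ordinal.toNimber_eq_zero {a : Ordinal.{u}} : ∗a = (0 : Nimber.{u}) ↔ a = 0 := Iff.rfl
theorem Nimber.not_lt_zero (a : Nimber.{u}) : ¬ a < 0 := (show ∀ b : Ordinal.{u}, ¬ b < 0 from fun b => (zero_le (a := b)).not_gt) a

namespace SetTheory.PGame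
def LeftMoves : PGame.{u} → Type u
  | mk l _ _ _ => l
def moveLeft : (x : PGame.{u}) → x.LeftMoves → PGame.{u}
  | mk _ _ L _ => L
theorem grundyValue_eq_sInf_moveLeft (x : PGame.{u}) :
    grundyValue x = sInf (Set.range (grundyValue ∘ x.moveLeft))ᶜ := by
  cases x; rw [grundyValue]; rfl
theorem grundyValue_zero : grundyValue (0 : PGame.{u}) = 0 := by
  rw [grundyValue_eq_sInf_moveLeft]
  have : Set.range (grundyValue ∘ (0 : PGame.{u}).moveLeft) = ∅ := by
    rw [Set.range_eq_empty_iff]; exact ⟨fun i => PEmpty.elim i⟩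
  rw [this, Set.compl_empty]
  exact le_antisymm (csInf_le' (Set.mem_univ _)) (le_of_not_gt (Nimber.not_lt_zero _))
end SetTheory.PGame



theorem nim1_ne : (∗1 : Nimber) ≠ 0 := by
  rw [Ne, Ordinal.toNimber_eq_zero]; norm_num
theorem nim2_ne : (∗2 : Nimber) ≠ 0 := by
  rw [Ne, Ordinal.toNimber_eq_zero]; norm_num
theorem nim2_ne1 : (∗2 : Nimber) ≠ ∗1 := by
  exact (show (2 : Ordinal) ≠ 1 by norm_num)
theorem lt_nim1 (m : Nimber) (h : m < ∗1) : m = 0 := by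
  obtain ⟨o, rfl⟩ : ∃ o : Ordinal, ∗o = m := ⟨m, rfl⟩
  change o < 1 at h
  exact Ordinal.lt_one_iff_zero.mp h
theorem lt_nim2 (m : Nimber) (h : m < ∗2) : m = 0 ∨ m = ∗1 := by
  obtain ⟨o, rfl⟩ : ∃ o : Ordinal, ∗o = m := ⟨m, rfl⟩
  change o < 2 at h
  have : o ≤ 1 := by
    have h2 : (2 : Ordinal) = Order.succ 1 := by
      rw [← Ordinal.add_one_eq_succ]; norm_num
    rw [h2, Order.lt_succ_iff] at h; exact h
  exact Ordinal.le_one_iff.mp this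

theorem mex0 {ι : Type} (f : ι → Nimber) (h : ∀ i, f i ≠ 0) : sInf (Set.range f)ᶜ = 0 := by
  have h0 : (0 : Nimber) ∈ (Set.range f)ᶜ := by
    simp only [Set.mem_compl_iff, Set.mem_range]; rintro ⟨i, hi⟩; exact h i hi
  exact le_antisymm (csInf_le' h0) (le_of_not_gt (Nimber.not_lt_zero _))

theorem mex1 {ι : Type} (f : ι → Nimber) (h0 : ∃ i, f i = 0) (h1 : ∀ i, f i ≠ ∗1) :
    sInf (Set.range f)ᶜ = ∗1 := by
  have hm : (∗1 : Nimber) ∈ (Set.range f)ᶜ := by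
    simp only [Set.mem_compl_iff, Set.mem_range]; rintro ⟨i, hi⟩; exact h1 i hi
  refine le_antisymm (csInf_le' hm) (le_csInf ⟨_, hm⟩ fun b hb => ?_)
  by_contra hlt
  push_neg at hlt
  rcases lt_nim1 b hlt with rfl
  obtain ⟨i, hi⟩ := h0
  exact hb ⟨i, hi⟩

theorem mex2 {ι : Type} (f : ι → Nimber) (h0 : ∃ i, f i = 0) (h1 : ∃ i, f i = ∗1)
    (h2 : ∀ i, f i ≠ ∗2) : sInf (Set.range f)ᶜ = ∗2 := by
  have hm : (∗2 : Nimber) ∈ (Set.range f)ᶜ := by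
    simp only [Set.mem_compl_iff, Set.mem_range]; rintro ⟨i, hi⟩; exact h2 i hi
  refine le_antisymm (csInf_le' hm) (le_csInf ⟨_, hm⟩ fun b hb => ?_)
  by_contra hlt
  push_neg at hlt
  rcases lt_nim2 b hlt with rfl | rfl
  · obtain ⟨i, hi⟩ := h0; exact hb ⟨i, hi⟩
  · obtain ⟨i, hi⟩ := h1; exact hb ⟨i, hi⟩

section Aux
variable {G : Type} [Group G]

/-- closure absorbs: adding one element to a closure. -/
theorem closure_insert_closure (S : Set G) (g : G) :
    Subgroup.closure (insert g ((Subgroup.closure S : Subgroup G) : Set G)) =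
      Subgroup.closure (insert g S) := by
  refine le_antisymm ?_ (Subgroup.closure_mono (Set.insert_subset_insert Subgroup.subset_closure))
  rw [Subgroup.closure_le]
  rw [Set.insert_subset_iff]
  constructor
  · exact Subgroup.subset_closure (Set.mem_insert _ _)
  · rw [SetLike.coe_subset_coe, Subgroup.closure_le]
    exact (Set.subset_insert _ _).trans Subgroup.subset_closure

/-- class-1 predicate: one more element suffices to generate. -/
def sat1 (K : Subgroup G) : Prop := ∃ g : G, Subgroup.closure (insert g (K : Set G)) = ⊤

/-- class ≤ 2 predicate: two more elements suffice to generate. -/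
def sat2 (K : Subgroup G) : Prop :=
  ∃ g h : G, Subgroup.closure (insert g (insert h (K : Set G))) = ⊤

theorem sat1_mono {K K' : Subgroup G} (h : K ≤ K') (h1 : sat1 K) : sat1 K' := by
  obtain ⟨g, hg⟩ := h1
  exact ⟨g, top_le_iff.mp (hg ▸ Subgroup.closure_mono (Set.insert_subset_insert h))⟩

theorem sat2_mono {K K' : Subgroup G} (h : K ≤ K') (h2 : sat2 K) : sat2 K' := by
  obtain ⟨g, h', hg⟩ := h2
  exact ⟨g, h', top_le_iff.mp (hg ▸ Subgroup.closure_mono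
    (Set.insert_subset_insert (Set.insert_subset_insert h)))⟩

theorem sat1_sat2 {K : Subgroup G} (h : sat1 K) : sat2 K := by
  obtain ⟨g, hg⟩ := h
  exact ⟨g, g, by rwa [Set.insert_idem]⟩

theorem insert_mem_closure_eq {P : Finset G} {g : G}
    (hg : g ∈ Subgroup.closure (P : Set G)) :
    Subgroup.closure (insert g (P : Set G)) = Subgroup.closure (P : Set G) := by
  refine le_antisymm ?_ (Subgroup.closure_mono (Set.subset_insert _ _))
  rw [Subgroup.closure_le, Set.insert_subset_iff]
  exact ⟨hg, Subgroup.subset_closure⟩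

theorem closure_insert_eq_closure_insert_coe (P : Finset G) (g : G) :
    Subgroup.closure (insert g (P : Set G)) =
      Subgroup.closure (insert g ((Subgroup.closure (P : Set G) : Subgroup G) : Set G)) :=
  (closure_insert_closure _ g).symm

end Aux

section Parity
variable {G : Type} [Group G] [Fintype G]

/-- In a group of odd order, an even-size subset of a subgroup misses some element. -/
theorem exists_mem_not_mem {K : Subgroup G} (hG : Odd (Fintype.card G)) {P : Finset G}
    (hP : (P : Set G) ⊆ (K : Set G)) (he : Even P.card) : ∃ g, g ∈ K ∧ g ∉ P := by
  by_contra hc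
  push_neg at hc
  have hKP : (K : Set G) = (P : Set G) := le_antisymm (fun x hx => hc x hx) hP
  have hodd : Odd (Nat.card K) := by
    have hd : Nat.card K ∣ Fintype.card G := by
      rw [← Nat.card_eq_fintype_card]; exact Subgroup.card_subgroup_dvd_card K
    rcases Nat.even_or_odd (Nat.card K) with h | h
    · exact absurd (even_iff_two_dvd.mpr (h.two_dvd.trans hd)) (Nat.not_even_iff_odd.mpr hG)
    · exact h
  have hcard : Nat.card K = P.card := by
    have : Nat.card K = Nat.card ((K : Set G) : Type) := rfl
    rw [this, Nat.card_coe_set_eq, hKP, Set.ncard_coe_finset]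
  rw [hcard] at hodd
  exact (Nat.not_odd_iff_even.mpr he) hodd

end Parity

section Target
variable {G : Type} [Group G]

/-- The conjectured Grundy value of a position with closure `K` and `n` selected elements. -/
noncomputable def target (K : Subgroup G) (n : ℕ) : Nimber :=
  if K = ⊤ then 0
  else if sat1 K then (if Even n then ∗2 else ∗1)
  else if sat2 K then (if Even n then ∗2 else 0)
  else (if Even n then ∗1 else 0)

end Target

theorem main {G : Type} [Group G] [Fintype G] (hG : Odd (Fintype.card G)) :
    ∀ n (P : Finset G), Fintype.card G - P.card ≤ n →
      PGame.grundyValue (genGame P) = target (Subgroup.closure (P : Set G)) P.card := by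
  intro n
  induction n with
  | zero =>
      intro P hP
      have hcard : P.card = Fintype.card G := le_antisymm (Finset.card_le_univ _) (by omega)
      have hU : P = Finset.univ := Finset.eq_univ_of_card _ hcard
      subst hU
      have htop : Subgroup.closure ((Finset.univ : Finset G) : Set G) = ⊤ := by
        rw [Finset.coe_univ, Subgroup.closure_univ]
      rw [genGame, if_pos htop, target, if_pos htop]
      exact PGame.grundyValue_zero
  | succ n IH =>
      intro P hP
      by_cases hK : Subgroup.closure (P : Set G) = ⊤
      · rw [genGame, if_pos hK, target, if_pos hK]; exact PGame.grundyValue_zero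
      set K := Subgroup.closure (P : Set G) with hKdef
      have hPK : (P : Set G) ⊆ (K : Set G) := Subgroup.subset_closure
      have hkey : ∀ (g : G) (_ : g ∉ P),
          PGame.grundyValue (genGame (insert g P)) =
            target (Subgroup.closure (insert g (P : Set G))) (P.card + 1) := by
        intro g hg
        have h1 : (insert g P).card = P.card + 1 := Finset.card_insert_of_notMem hg
        have := IH (insert g P) (by omega)
        rwa [Finset.coe_insert, h1] at this
      rw [genGame, if_neg hK, PGame.grundyValue_eq_sInf_moveLeft]
      have hfun : (PGame.grundyValue ∘ (PGame.mk {g : G // g ∉ P} {g : G // g ∉ P}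
            (fun g => genGame (insert g.1 P)) (fun g => genGame (insert g.1 P))).moveLeft) =
          fun i : {g : G // g ∉ P} =>
            target (Subgroup.closure (insert i.1 (P : Set G))) (P.card + 1) :=
        funext fun i => hkey i.1 i.2
      rw [hfun]
      -- facts about option subgroups
      have hcoe : ∀ i : {g : G // g ∉ P},
          Subgroup.closure (insert i.1 (P : Set G)) =
            Subgroup.closure (insert i.1 (K : Set G)) := fun i =>
        closure_insert_eq_closure_insert_coe P i.1
      have hle : ∀ i : {g : G // g ∉ P},
          K ≤ Subgroup.closure (insert i.1 (P : Set G)) := fun i =>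
        Subgroup.closure_mono (Set.subset_insert _ _)
      have hodd1 : ¬ Even (P.card + 1) ↔ Even P.card := by
        rw [Nat.even_add_one, not_not]
      by_cases hs1 : sat1 K
      · -- class 1
        obtain ⟨g, hg⟩ := id hs1
        have hgP : g ∉ P := by
          intro h
          have heq : insert g (K : Set G) = (K : Set G) := Set.insert_eq_self.mpr (hPK h)
          rw [heq, Subgroup.closure_eq] at hg
          exact hK hg
        have hzero : ∃ i : {g : G // g ∉ P},
            target (Subgroup.closure (insert i.1 (P : Set G))) (P.card + 1) = 0 :=
          ⟨⟨g, hgP⟩, by rw [hcoe ⟨g, hgP⟩, hg, target, if_pos rfl]⟩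
        have hvals : ∀ i : {g : G // g ∉ P},
            target (Subgroup.closure (insert i.1 (P : Set G))) (P.card + 1) = 0 ∨
            target (Subgroup.closure (insert i.1 (P : Set G))) (P.card + 1) =
              (if Even (P.card + 1) then ∗2 else ∗1) := by
          intro i
          by_cases ht : Subgroup.closure (insert i.1 (P : Set G)) = ⊤
          · left; rw [target, if_pos ht]
          · right; rw [target, if_neg ht, if_pos (sat1_mono (hle i) hs1)]
        by_cases hpar : Even P.card
        · rw [target, if_neg hK, if_pos hs1, if_pos hpar]
          have hnp : ¬ Even (P.card + 1) := hodd1.mpr hpar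
          refine mex2 _ hzero ?_ ?_
          · obtain ⟨g', hg'K, hg'P⟩ := exists_mem_not_mem hG hPK hpar
            refine ⟨⟨g', hg'P⟩, ?_⟩
            rw [insert_mem_closure_eq hg'K, target, if_neg hK, if_pos hs1, if_neg hnp]
          · intro i
            rcases hvals i with h | h <;> rw [h]
            · exact fun h => nim2_ne h.symm
            · rw [if_neg hnp]; exact fun h => nim2_ne1 h.symm
        · rw [target, if_neg hK, if_pos hs1, if_neg hpar]
          have hnp : Even (P.card + 1) := by rw [Nat.even_add_one]; exact hpar
          refine mex1 _ hzero ?_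
          intro i
          rcases hvals i with h | h <;> rw [h]
          · exact fun h => nim1_ne h.symm
          · rw [if_pos hnp]; exact nim2_ne1
      · -- classes 2 and 3
        have hKgtop : ∀ i : {g : G // g ∉ P},
            Subgroup.closure (insert i.1 (P : Set G)) ≠ ⊤ := by
          intro i ht
          exact hs1 ⟨i.1, by rw [← hcoe i]; exact ht⟩
        by_cases hs2 : sat2 K
        · -- class 2
          by_cases hpar : Even P.card
          · rw [target, if_neg hK, if_neg hs1, if_pos hs2, if_pos hpar]
            have hnp : ¬ Even (P.card + 1) := hodd1.mpr hpar
            refine mex2 _ ?_ ?_ ?_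
            · obtain ⟨g', hg'K, hg'P⟩ := exists_mem_not_mem hG hPK hpar
              refine ⟨⟨g', hg'P⟩, ?_⟩
              rw [insert_mem_closure_eq hg'K, target, if_neg hK, if_neg hs1, if_pos hs2,
                if_neg hnp]
            · obtain ⟨g, h, hgh⟩ := id hs2
              have hhP : h ∉ P := by
                intro hmem
                have heq : insert h (K : Set G) = (K : Set G) := Set.insert_eq_self.mpr (hPK hmem)
                rw [heq] at hgh
                exact hs1 ⟨g, hgh⟩
              refine ⟨⟨h, hhP⟩, ?_⟩
              have hs1' : sat1 (Subgroup.closure (insert h (P : Set G))) := by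
                refine ⟨g, ?_⟩
                rw [hcoe ⟨h, hhP⟩, closure_insert_closure]
                exact hgh
              rw [target, if_neg (hKgtop ⟨h, hhP⟩), if_pos hs1', if_neg hnp]
            · intro i
              rw [target, if_neg (hKgtop i)]
              by_cases h1' : sat1 (Subgroup.closure (insert i.1 (P : Set G)))
              · rw [if_pos h1', if_neg hnp]; exact fun h => nim2_ne1 h.symm
              · rw [if_neg h1', if_pos (sat2_mono (hle i) hs2), if_neg hnp]
                exact fun h => nim2_ne h.symm
          · rw [target, if_neg hK, if_neg hs1, if_pos hs2, if_neg hpar]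
            have hnp : Even (P.card + 1) := by rw [Nat.even_add_one]; exact hpar
            refine mex0 _ ?_
            intro i
            rw [target, if_neg (hKgtop i)]
            by_cases h1' : sat1 (Subgroup.closure (insert i.1 (P : Set G)))
            · rw [if_pos h1', if_pos hnp]; exact nim2_ne
            · rw [if_neg h1', if_pos (sat2_mono (hle i) hs2), if_pos hnp]; exact nim2_ne
        · -- class 3
          have hKg1 : ∀ i : {g : G // g ∉ P},
              ¬ sat1 (Subgroup.closure (insert i.1 (P : Set G))) := by
            rintro i ⟨h, hh⟩
            refine hs2 ⟨h, i.1, ?_⟩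
            rw [hcoe i, closure_insert_closure] at hh
            exact hh
          by_cases hpar : Even P.card
          · rw [target, if_neg hK, if_neg hs1, if_neg hs2, if_pos hpar]
            have hnp : ¬ Even (P.card + 1) := hodd1.mpr hpar
            have hval : ∀ i : {g : G // g ∉ P},
                target (Subgroup.closure (insert i.1 (P : Set G))) (P.card + 1) = 0 := by
              intro i
              rw [target, if_neg (hKgtop i), if_neg (hKg1 i)]
              by_cases hs : sat2 (Subgroup.closure (insert i.1 (P : Set G)))
              · rw [if_pos hs, if_neg hnp]
              · rw [if_neg hs, if_neg hnp]
            obtain ⟨g, hgK⟩ : ∃ g, g ∉ K := by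
              by_contra hc
              push_neg at hc
              exact hK ((Subgroup.eq_top_iff' K).mpr hc)
            have hgP : g ∉ P := fun h => hgK (hPK h)
            refine mex1 _ ⟨⟨g, hgP⟩, hval _⟩ ?_
            intro i
            rw [hval i]
            exact fun h => nim1_ne h.symm
          · rw [target, if_neg hK, if_neg hs1, if_neg hs2, if_neg hpar]
            have hnp : Even (P.card + 1) := by rw [Nat.even_add_one]; exact hpar
            refine mex0 _ ?_
            intro i
            rw [target, if_neg (hKgtop i), if_neg (hKg1 i)]
            by_cases hs : sat2 (Subgroup.closure (insert i.1 (P : Set G)))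
            · rw [if_pos hs, if_pos hnp]; exact nim2_ne
            · rw [if_neg hs, if_pos hnp]; exact nim1_ne



theorem closure_insert_bot {H : Type} [Group H] (g : H) :
    Subgroup.closure (insert g ((⊥ : Subgroup H) : Set H)) = Subgroup.closure {g} := by
  have h : ((⊥ : Subgroup H) : Set H) = ((Subgroup.closure (∅ : Set H) : Subgroup H) : Set H) := by
    rw [Subgroup.closure_empty]
  rw [h, closure_insert_closure]
  simp

theorem closure_pair_bot {H : Type} [Group H] (g h : H) :
    Subgroup.closure (insert g (insert h ((⊥ : Subgroup H) : Set H))) =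
      Subgroup.closure {g, h} := by
  rw [← closure_insert_closure (insert h ((⊥ : Subgroup H) : Set H)) g, closure_insert_bot,
    closure_insert_closure]


theorem nimGEN_odd_order (H : Type) [Group H] [Fintype H] (hH : Odd (Fintype.card H)) :
    nimGEN H =
      if Fintype.card H = 1 then ∗0
      else if 1 < Fintype.card H ∧ (minGen H = 1 ∨ minGen H = 2) then ∗2
      else ∗1 := by
  by_cases h1 : Fintype.card H = 1
  · rw [if_pos h1]
    have hs : Subsingleton H := Fintype.card_le_one_iff_subsingleton.mp h1.le
    have htop : Subgroup.closure ((∅ : Finset H) : Set H) = ⊤ := by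
      rw [Subgroup.eq_top_iff']
      intro x
      have : x = 1 := Subsingleton.elim _ _
      rw [this]; exact one_mem _
    rw [nimGEN, genGame, if_pos htop, PGame.grundyValue_zero]
    exact Ordinal.toNimber_zero.symm
  · rw [if_neg h1]
    have hlt : 1 < Fintype.card H := lt_of_le_of_ne Fintype.card_pos (Ne.symm h1)
    have hnt : Nontrivial H := Fintype.one_lt_card_iff_nontrivial.mp hlt
    have hbot : Subgroup.closure ((∅ : Finset H) : Set H) = ⊥ := by
      rw [Finset.coe_empty, Subgroup.closure_empty]
    have hKne : (⊥ : Subgroup H) ≠ ⊤ := bot_ne_top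
    have hmain := main hH (Fintype.card H) ∅ (by simp)
    rw [hbot, Finset.card_empty] at hmain
    rw [nimGEN, hmain]
    have hne : {n : ℕ | ∃ S : Finset H, S.card = n ∧ Subgroup.closure (S : Set H) = ⊤}.Nonempty :=
      ⟨_, Finset.univ, rfl, by rw [Finset.coe_univ, Subgroup.closure_univ]⟩
    have hmem : minGen H ∈
        {n : ℕ | ∃ S : Finset H, S.card = n ∧ Subgroup.closure (S : Set H) = ⊤} :=
      Nat.sInf_mem hne
    have hzero : minGen H ≠ 0 := by
      intro h
      rw [h] at hmem
      obtain ⟨S, hS0, hSg⟩ := hmem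
      rw [Finset.card_eq_zero] at hS0
      subst hS0
      rw [hbot] at hSg
      exact hKne hSg
    by_cases hC : minGen H = 1 ∨ minGen H = 2
    · rw [if_pos ⟨hlt, hC⟩]
      have hs2 : sat2 (⊥ : Subgroup H) := by
        rcases hC with h | h
        · rw [h] at hmem
          obtain ⟨S, hS1, hSg⟩ := hmem
          obtain ⟨a, rfl⟩ := Finset.card_eq_one.mp hS1
          rw [Finset.coe_singleton] at hSg
          exact ⟨a, a, by rw [Set.insert_idem, closure_insert_bot]; exact hSg⟩
        · rw [h] at hmem
          obtain ⟨S, hS2, hSg⟩ := hmem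
          obtain ⟨a, b, hab, rfl⟩ := Finset.card_eq_two.mp hS2
          rw [Finset.coe_insert, Finset.coe_singleton] at hSg
          exact ⟨a, b, by rw [closure_pair_bot]; exact hSg⟩
      rw [target, if_neg hKne]
      by_cases hs1 : sat1 (⊥ : Subgroup H)
      · rw [if_pos hs1, if_pos Even.zero]
      · rw [if_neg hs1, if_pos hs2, if_pos Even.zero]
    · rw [if_neg fun h => hC h.2]
      have hs2n : ¬ sat2 (⊥ : Subgroup H) := by
        rintro ⟨g, h, hgh⟩
        rw [closure_pair_bot] at hgh
        have hle : minGen H ≤ ({g, h} : Finset H).card := by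
          apply Nat.sInf_le
          refine ⟨{g, h}, rfl, ?_⟩
          rw [Finset.coe_insert, Finset.coe_singleton]
          exact hgh
        have hcard : ({g, h} : Finset H).card ≤ 2 :=
          (Finset.card_insert_le _ _).trans (by rw [Finset.card_singleton])
        have : minGen H ≤ 2 := hle.trans hcard
        interval_cases h' : minGen H <;> simp_all
      have hs1n : ¬ sat1 (⊥ : Subgroup H) := fun h => hs2n (sat1_sat2 h)
      rw [target, if_neg hKne, if_neg hs1n, if_neg hs2n, if_pos Even.zero]
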